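/- Let p, q, k be natural numbers with 1 ≤ k and 2k ≤ p + q. Then max{ C(p,i)·C(q,j) : i + j = k − 1 } ≤ max{ C(p,i)·C(q,j) : i + j = k }. That is, for radii up to (p+q)/2, the size of the largest layer of the sphere S_k[p,q] is nondecreasing in k. -/
import Mathlib

lemma choose_mono_aux (n r : ℕ) (h : 2 * r + 1 ≤ n) :
    Nat.choose n r ≤ Nat.choose n (r + 1) := by
  rcases eq_or_lt_of_le h with h' | h'
  · have hr : r ≤ n := by omega
    have hnr : n - r = r + 1 := by omega
    rw [← hnr, Nat.choose_symm hr]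
  · exact Nat.choose_le_succ_of_lt_half_left (by omega)

/-- For `1 ≤ k` with `2k ≤ p + q`, the size of the largest layer of the sphere
`S_k[p,q]`, namely `max { C(p,i) * C(q,j) : i + j = k }`, is nondecreasing in `k`. -/
theorem stmt_6 (p q k : ℕ) (hk : 1 ≤ k) (hkpq : 2 * k ≤ p + q) :
    (Finset.range k).sup (fun i => Nat.choose p i * Nat.choose q (k - 1 - i)) ≤
      (Finset.range (k + 1)).sup (fun i => Nat.choose p i * Nat.choose q (k - i)) := by
  apply Finset.sup_le
  intro i hi
  have hik : i < k := Finset.mem_range.mp hi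
  by_cases hp : 2 * i + 1 ≤ p
  · have e1 : k - (i + 1) = k - 1 - i := by omega
    calc Nat.choose p i * Nat.choose q (k - 1 - i)
        ≤ Nat.choose p (i + 1) * Nat.choose q (k - (i + 1)) := by
          rw [e1]; exact Nat.mul_le_mul_right _ (choose_mono_aux p i hp)
      _ ≤ _ := Finset.le_sup (f := fun i => Nat.choose p i * Nat.choose q (k - i))
          (Finset.mem_range.mpr (by omega))
  · have hq : 2 * (k - 1 - i) + 1 ≤ q := by omega
    have e1 : k - 1 - i + 1 = k - i := by omega
    calc Nat.choose p i * Nat.choose q (k - 1 - i)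
        ≤ Nat.choose p i * Nat.choose q (k - i) := by
          rw [← e1]; exact Nat.mul_le_mul_left _ (choose_mono_aux q _ hq)
      _ ≤ _ := Finset.le_sup (f := fun i => Nat.choose p i * Nat.choose q (k - i))
          (Finset.mem_range.mpr (by omega))
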